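/- Suppose there exist A ∈ 𝔸_L, B ∈ 𝔹_L such that the linear map F_{A,B} : 𝔸_L × 𝔹_L × Diag(n) → Sym(n), F_{A,B}(dA, dB, dΦ) = A·dAᵀ + dA·Aᵀ + B·dBᵀ + dB·Bᵀ + dΦ, is injective. Then Condition 4 holds: r_0 ≤ (2n + 1 − √(8(n + D) + 1))/2 where D = Σ_{c=1}^C [n_c·r_c − r_c(r_c−1)/2], and r_c ≤ (2n_c + 1 − √(8n_c + 1))/2 for every c = 1,…,C (inequalities in ℝ, with natural numbers cast to reals). -/

import Mathlib

open Matrix MeasureTheory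

/-- The order-preserving identification of `Fin (∑ c, n c)` with the lexicographically ordered
disjoint union of the channels. -/
noncomputable def chanIdx {C : ℕ} (n : Fin C → ℕ) :
    Fin (∑ c, n c) ≃ ((c : Fin C) × Fin (n c)) :=
  (Fintype.orderIsoFinOfCardEq (Σₗ c : Fin C, Fin (n c))
    (by simp [Fintype.card_sigma])).toEquiv.trans ofLex

/-- The block-diagonal matrix `blkdiag(B₁, …, B_C)`, with rows and columns stacked
channel-by-channel. -/
noncomputable def blkdiag {C : ℕ} (n r : Fin C → ℕ)
    (B : ∀ c, Matrix (Fin (n c)) (Fin (r c)) ℝ) :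
    Matrix (Fin (∑ c, n c)) (Fin (∑ c, r c)) ℝ :=
  (Matrix.blockDiagonal' B).submatrix (chanIdx n) (chanIdx r)

/-- Index set of the free entries of an `N × r₀` loading matrix whose top `r₀ × r₀` block is
constrained to be lower triangular (the entry `(i, j)` is constrained to vanish exactly when
`i < r₀` and `i < j`). -/
def FreeIdx (N r0 : ℕ) : Type :=
  {p : Fin N × Fin r0 // (p.2 : ℕ) ≤ (p.1 : ℕ) ∨ r0 ≤ (p.1 : ℕ)}

instance (N r0 : ℕ) : Fintype (FreeIdx N r0) := by unfold FreeIdx; infer_instance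

/-- Builds a loading matrix with lower-triangular top block from its free entries. -/
def toMat {N r0 : ℕ} (a : FreeIdx N r0 → ℝ) : Matrix (Fin N) (Fin r0) ℝ :=
  Matrix.of fun i j =>
    if h : (j : ℕ) ≤ (i : ℕ) ∨ r0 ≤ (i : ℕ) then a ⟨(i, j), h⟩ else 0

lemma card_freeIdx_two (N r0 : ℕ) (h : r0 ≤ N) :
    2 * Fintype.card (FreeIdx N r0) + r0 * (r0 - 1) = 2 * N * r0 := by
  have h1 : Fintype.card (FreeIdx N r0)
      = (Finset.univ.filter fun p : Fin N × Fin r0 =>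
          (p.2 : ℕ) ≤ (p.1 : ℕ) ∨ r0 ≤ (p.1 : ℕ)).card := by
    exact Fintype.card_of_subtype _ (by simp)
  rw [h1, Finset.card_filter, Fintype.sum_prod_type]
  have h2 : ∀ i : Fin N, (∑ j : Fin r0,
      if (j : ℕ) ≤ (i : ℕ) ∨ r0 ≤ (i : ℕ) then 1 else 0)
      = if r0 ≤ (i : ℕ) then r0 else (i : ℕ) + 1 := by
    intro i
    by_cases hi : r0 ≤ (i : ℕ)
    · simp [hi]
    · simp only [hi, or_false, if_false]
      rw [Fin.sum_univ_eq_sum_range (fun j => if j ≤ (i : ℕ) then 1 else 0)]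
      rw [← Finset.card_filter]
      have : (Finset.range r0).filter (fun j => j ≤ (i : ℕ)) = Finset.range ((i : ℕ) + 1) := by
        ext x; simp; omega
      simp [this]
  simp only [h2]
  rw [Fin.sum_univ_eq_sum_range (fun i => if r0 ≤ i then r0 else i + 1)]
  rw [Finset.range_eq_Ico, ← Finset.sum_Ico_consecutive _ (Nat.zero_le r0) h]
  have e1 : ∑ i ∈ Finset.Ico 0 r0, (if r0 ≤ i then r0 else i + 1)
      = (∑ i ∈ Finset.range r0, i) + r0 := by
    rw [← Finset.range_eq_Ico]
    rw [Finset.sum_congr rfl (fun i hi => by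
      simp only [Finset.mem_range] at hi; rw [if_neg (by omega)])]
    rw [Finset.sum_add_distrib]
    simp
  have e2 : ∑ i ∈ Finset.Ico r0 N, (if r0 ≤ i then r0 else i + 1)
      = (N - r0) * r0 := by
    rw [Finset.sum_congr rfl (fun i hi => by
      simp only [Finset.mem_Ico] at hi; rw [if_pos (by omega)])]
    simp [Nat.card_Ico, Finset.sum_const, mul_comm]
  rw [e1, e2]
  have hS := Finset.sum_range_id_mul_two r0
  rcases Nat.eq_zero_or_pos r0 with h0 | h0
  · subst h0; simp
  · zify [h, h0] at hS ⊢
    linear_combination hS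

lemma card_freeIdx_real (N r0 : ℕ) (h : r0 ≤ N) :
    (Fintype.card (FreeIdx N r0) : ℝ)
      = (N : ℝ) * r0 - (r0 : ℝ) * ((r0 : ℝ) - 1) / 2 := by
  have h2 := card_freeIdx_two N r0 h
  rcases Nat.eq_zero_or_pos r0 with h0 | h0
  · subst h0
    have : Fintype.card (FreeIdx N 0) = 0 := by omega
    rw [this]; push_cast; ring
  · have hc : ((r0 - 1 : ℕ) : ℝ) = (r0 : ℝ) - 1 := by
      rw [Nat.cast_sub h0]; simp
    have h3 : ((2 * Fintype.card (FreeIdx N r0) + r0 * (r0 - 1) : ℕ) : ℝ)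
        = ((2 * N * r0 : ℕ) : ℝ) := by exact congrArg (fun k : ℕ => (k : ℝ)) h2
    push_cast [hc] at h3
    linarith

-- linearity of toMat
lemma toMat_add {N r0 : ℕ} (a b : FreeIdx N r0 → ℝ) :
    toMat (a + b) = toMat a + toMat b := by
  ext i j
  simp only [toMat, Matrix.of_apply, Matrix.add_apply, Pi.add_apply]
  split_ifs
  · rfl
  · simp

lemma toMat_smul {N r0 : ℕ} (t : ℝ) (a : FreeIdx N r0 → ℝ) :
    toMat (t • a) = t • toMat a := by
  ext i j
  simp only [toMat, Matrix.of_apply, Matrix.smul_apply, Pi.smul_apply, smul_eq_mul]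
  split_ifs
  · rfl
  · simp

lemma toMat_zero {N r0 : ℕ} : toMat (0 : FreeIdx N r0 → ℝ) = 0 := by
  ext i j
  simp only [toMat, Matrix.of_apply, Matrix.zero_apply, Pi.zero_apply]
  split_ifs
  · rfl
  · rfl

lemma blkdiag_add {C : ℕ} (n r : Fin C → ℕ)
    (P Q : ∀ c, Matrix (Fin (n c)) (Fin (r c)) ℝ) :
    blkdiag n r (fun c => P c + Q c) = blkdiag n r P + blkdiag n r Q := by
  unfold blkdiag
  rw [show (fun c => P c + Q c) = P + Q from rfl, Matrix.blockDiagonal'_add,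
    Matrix.submatrix_add]; rfl

lemma blkdiag_smul {C : ℕ} (n r : Fin C → ℕ) (t : ℝ)
    (P : ∀ c, Matrix (Fin (n c)) (Fin (r c)) ℝ) :
    blkdiag n r (fun c => t • P c) = t • blkdiag n r P := by
  unfold blkdiag
  rw [show (fun c => t • P c) = t • P from rfl, Matrix.blockDiagonal'_smul,
    Matrix.submatrix_smul]; rfl

lemma blkdiag_mul_t {C : ℕ} (n r : Fin C → ℕ)
    (B : ∀ c, Matrix (Fin (n c)) (Fin (r c)) ℝ)
    (X : ∀ c, Matrix (Fin (n c)) (Fin (r c)) ℝ) :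
    blkdiag n r B * (blkdiag n r X)ᵀ = blkdiag n n (fun c => B c * (X c)ᵀ) := by
  unfold blkdiag
  rw [Matrix.transpose_submatrix, Matrix.blockDiagonal'_transpose,
    Matrix.submatrix_mul_equiv, Matrix.blockDiagonal'_mul]

lemma diagonal_blk {C : ℕ} (n : Fin C → ℕ) (d : ∀ c, Fin (n c) → ℝ) :
    Matrix.diagonal (fun i => d (chanIdx n i).1 (chanIdx n i).2)
      = blkdiag n n (fun c => Matrix.diagonal (d c)) := by
  unfold blkdiag
  rw [Matrix.blockDiagonal'_diagonal, Matrix.submatrix_diagonal_equiv]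
  rfl

lemma blkdiag_apply_same {C : ℕ} (n r : Fin C → ℕ)
    (B : ∀ c, Matrix (Fin (n c)) (Fin (r c)) ℝ) (c : Fin C) (i : Fin (n c)) (j : Fin (r c)) :
    blkdiag n r B ((chanIdx n).symm ⟨c, i⟩) ((chanIdx r).symm ⟨c, j⟩) = B c i j := by
  unfold blkdiag
  rw [Matrix.submatrix_apply, Equiv.apply_symm_apply, Equiv.apply_symm_apply,
    Matrix.blockDiagonal'_apply_eq]

lemma blkdiag_inj {C : ℕ} (n r : Fin C → ℕ)
    {P Q : ∀ c, Matrix (Fin (n c)) (Fin (r c)) ℝ}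
    (h : blkdiag n r P = blkdiag n r Q) : P = Q := by
  funext c
  ext i j
  have := congrFun (congrFun h ((chanIdx n).symm ⟨c, i⟩)) ((chanIdx r).symm ⟨c, j⟩)
  rwa [blkdiag_apply_same, blkdiag_apply_same] at this
/-- The lower-triangular-top-block property defining `𝔸_L` (and, per channel, `𝔹_L`). -/
def IsLT {N r0 : ℕ} (h : r0 ≤ N) (A : Matrix (Fin N) (Fin r0) ℝ) : Prop :=
  ∀ i j : Fin r0, i < j → A (Fin.castLE h i) j = 0

/-- The starred property defining `𝔸*_L` (and, per channel, `𝔹*_L`). -/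
def IsLTStar {N r0 : ℕ} (h : r0 ≤ N) (A : Matrix (Fin N) (Fin r0) ℝ) : Prop :=
  IsLT h A ∧ ∀ j : Fin r0,
    0 < A (Fin.castLE h j) j ∨ ∀ i : Fin r0, A (Fin.castLE h i) j = 0

/-- The differential map `F_{A,B}(dA, dB, dΦ) = A dAᵀ + dA Aᵀ + B dBᵀ + dB Bᵀ + dΦ`, with
domain `𝔸_L × 𝔹_L × Diag(n)` in its free-entry parameterization. -/
noncomputable def Fdiff {C : ℕ} (n r : Fin C → ℕ) (r0 : ℕ)
    (A : Matrix (Fin (∑ c, n c)) (Fin r0) ℝ)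
    (B : ∀ c, Matrix (Fin (n c)) (Fin (r c)) ℝ)
    (e : (FreeIdx (∑ c, n c) r0 → ℝ) × ((c : Fin C) → FreeIdx (n c) (r c) → ℝ)
          × (Fin (∑ c, n c) → ℝ)) :
    Matrix (Fin (∑ c, n c)) (Fin (∑ c, n c)) ℝ :=
  A * (toMat e.1)ᵀ + toMat e.1 * Aᵀ
    + blkdiag n r B * (blkdiag n r fun c => toMat (e.2.1 c))ᵀ
    + (blkdiag n r fun c => toMat (e.2.1 c)) * (blkdiag n r B)ᵀ
    + Matrix.diagonal e.2.2

-- the "small" differential map used both for Fdiff pieces and per-channel argument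
noncomputable def Sd {N r0 : ℕ} (M : Matrix (Fin N) (Fin r0) ℝ)
    (x : (FreeIdx N r0 → ℝ) × (Fin N → ℝ)) : Matrix (Fin N) (Fin N) ℝ :=
  M * (toMat x.1)ᵀ + toMat x.1 * Mᵀ + Matrix.diagonal x.2

lemma Sd_add {N r0 : ℕ} (M : Matrix (Fin N) (Fin r0) ℝ) (x y) :
    Sd M (x + y) = Sd M x + Sd M y := by
  unfold Sd
  have hd : Matrix.diagonal (x.2 + y.2) = Matrix.diagonal x.2 + Matrix.diagonal y.2 :=
    (Matrix.diagonal_add x.2 y.2).symm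
  simp only [Prod.fst_add, Prod.snd_add, toMat_add, Matrix.transpose_add,
    Matrix.mul_add, Matrix.add_mul, hd]
  abel

lemma Sd_smul {N r0 : ℕ} (M : Matrix (Fin N) (Fin r0) ℝ) (t : ℝ) (x) :
    Sd M (t • x) = t • Sd M x := by
  unfold Sd
  simp only [Prod.smul_fst, Prod.smul_snd, toMat_smul, Matrix.transpose_smul,
    Matrix.mul_smul, Matrix.smul_mul, Matrix.diagonal_smul, smul_add]

lemma Sd_transpose {N r0 : ℕ} (M : Matrix (Fin N) (Fin r0) ℝ) (x) :
    (Sd M x)ᵀ = Sd M x := by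
  unfold Sd
  simp only [Matrix.transpose_add, Matrix.transpose_mul, Matrix.transpose_transpose,
    Matrix.diagonal_transpose]
  abel

lemma Fdiff_transpose {C : ℕ} (n r : Fin C → ℕ) (r0 : ℕ) (A) (B) (e) :
    (Fdiff n r r0 A B e)ᵀ = Fdiff n r r0 A B e := by
  unfold Fdiff
  simp only [Matrix.transpose_add, Matrix.transpose_mul, Matrix.transpose_transpose,
    Matrix.diagonal_transpose]
  abel

lemma Fdiff_add {C : ℕ} (n r : Fin C → ℕ) (r0 : ℕ) (A) (B) (e f) :
    Fdiff n r r0 A B (e + f) = Fdiff n r r0 A B e + Fdiff n r r0 A B f := by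
  unfold Fdiff
  have h1 : (fun c => toMat ((e + f).2.1 c))
      = fun c => toMat (e.2.1 c) + toMat (f.2.1 c) := by
    funext c; exact toMat_add _ _
  have h2 : (e + f).1 = e.1 + f.1 := rfl
  have h3 : (e + f).2.2 = e.2.2 + f.2.2 := rfl
  have hd : Matrix.diagonal (e.2.2 + f.2.2) = Matrix.diagonal e.2.2 + Matrix.diagonal f.2.2 :=
    (Matrix.diagonal_add e.2.2 f.2.2).symm
  rw [h1, h2, h3, blkdiag_add, toMat_add, hd]
  simp only [Matrix.transpose_add, Matrix.mul_add, Matrix.add_mul]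
  abel

lemma Fdiff_smul {C : ℕ} (n r : Fin C → ℕ) (r0 : ℕ) (A) (B) (t : ℝ) (e) :
    Fdiff n r r0 A B (t • e) = t • Fdiff n r r0 A B e := by
  unfold Fdiff
  have h1 : (fun c => toMat ((t • e).2.1 c))
      = fun c => t • toMat (e.2.1 c) := by
    funext c; exact toMat_smul _ _
  have h2 : (t • e).1 = t • e.1 := rfl
  have h3 : (t • e).2.2 = t • e.2.2 := rfl
  rw [h1, h2, h3, blkdiag_smul, toMat_smul, Matrix.diagonal_smul]
  simp only [Matrix.transpose_smul, Matrix.mul_smul, Matrix.smul_mul, smul_add]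

lemma symm_entries_eq {N : ℕ} {M M' : Matrix (Fin N) (Fin N) ℝ}
    (hM : Mᵀ = M) (hM' : M'ᵀ = M')
    (h : ∀ p : FreeIdx N N, M p.1.1 p.1.2 = M' p.1.1 p.1.2) : M = M' := by
  ext i j
  rcases le_or_gt (j : ℕ) (i : ℕ) with hij | hij
  · exact h ⟨(i, j), Or.inl hij⟩
  · have h2 := h ⟨(j, i), Or.inl hij.le⟩
    rw [show M i j = Mᵀ j i from rfl, hM, show M' i j = M'ᵀ j i from rfl, hM']
    exact h2

set_option maxHeartbeats 1000000 in
lemma dim_main {C : ℕ} (n r : Fin C → ℕ) (r0 : ℕ)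
    (A : Matrix (Fin (∑ c, n c)) (Fin r0) ℝ)
    (B : ∀ c, Matrix (Fin (n c)) (Fin (r c)) ℝ)
    (hF : Function.Injective (Fdiff n r r0 A B)) :
    Fintype.card (FreeIdx (∑ c, n c) r0) + (∑ c, Fintype.card (FreeIdx (n c) (r c)))
      + (∑ c, n c) ≤ Fintype.card (FreeIdx (∑ c, n c) (∑ c, n c)) := by
  let G : ((FreeIdx (∑ c, n c) r0 → ℝ) × ((c : Fin C) → FreeIdx (n c) (r c) → ℝ)
          × (Fin (∑ c, n c) → ℝ)) →ₗ[ℝ] (FreeIdx (∑ c, n c) (∑ c, n c) → ℝ) :=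
    { toFun := fun e p => Fdiff n r r0 A B e p.1.1 p.1.2
      map_add' := fun e f => by
        funext p; exact congrFun (congrFun (Fdiff_add n r r0 A B e f) _) _
      map_smul' := fun t e => by
        funext p; exact congrFun (congrFun (Fdiff_smul n r r0 A B t e) _) _ }
  have hG : Function.Injective G := by
    intro e f h
    apply hF
    apply symm_entries_eq (Fdiff_transpose n r r0 A B e) (Fdiff_transpose n r r0 A B f)
    intro p
    exact congrFun h p
  have hle := LinearMap.finrank_le_finrank_of_injective hG
  rw [Module.finrank_pi] at hle
  rw [Module.finrank_prod, Module.finrank_prod, Module.finrank_pi,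
    Module.finrank_pi, Module.finrank_pi_fintype] at hle
  simp only [Module.finrank_pi, Fintype.card_fin] at hle
  omega

lemma Fdiff_emb {C : ℕ} (n r : Fin C → ℕ) (r0 : ℕ)
    (A : Matrix (Fin (∑ c, n c)) (Fin r0) ℝ)
    (B : ∀ c, Matrix (Fin (n c)) (Fin (r c)) ℝ) (c : Fin C)
    (x : (FreeIdx (n c) (r c) → ℝ) × (Fin (n c) → ℝ)) :
    Fdiff n r r0 A B
      (0, Pi.single (M := fun c' => FreeIdx (n c') (r c') → ℝ) c x.1,
        fun i => Pi.single (M := fun c' => Fin (n c') → ℝ) c x.2 (chanIdx n i).1 (chanIdx n i).2)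
      = blkdiag n n (fun c' =>
          Sd (B c') (Pi.single (M := fun c' => FreeIdx (n c') (r c') → ℝ) c x.1 c', Pi.single (M := fun c' => Fin (n c') → ℝ) c x.2 c')) := by
  show A * (toMat 0)ᵀ + toMat 0 * Aᵀ
      + blkdiag n r B * (blkdiag n r fun c' => toMat (Pi.single (M := fun c' => FreeIdx (n c') (r c') → ℝ) c x.1 c'))ᵀ
      + (blkdiag n r fun c' => toMat (Pi.single (M := fun c' => FreeIdx (n c') (r c') → ℝ) c x.1 c')) * (blkdiag n r B)ᵀ
      + Matrix.diagonal
          (fun i => Pi.single (M := fun c' => Fin (n c') → ℝ) c x.2 (chanIdx n i).1 (chanIdx n i).2)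
      = _
  rw [toMat_zero, Matrix.transpose_zero, Matrix.mul_zero, Matrix.zero_mul, add_zero, zero_add,
    blkdiag_mul_t, blkdiag_mul_t n r _ B,
    diagonal_blk n (Pi.single (M := fun c' => Fin (n c') → ℝ) c x.2),
    ← blkdiag_add, ← blkdiag_add]
  rfl

lemma dim_chan {C : ℕ} (n r : Fin C → ℕ) (r0 : ℕ)
    (A : Matrix (Fin (∑ c, n c)) (Fin r0) ℝ)
    (B : ∀ c, Matrix (Fin (n c)) (Fin (r c)) ℝ)
    (hF : Function.Injective (Fdiff n r r0 A B)) (c : Fin C) :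
    Fintype.card (FreeIdx (n c) (r c)) + n c ≤ Fintype.card (FreeIdx (n c) (n c)) := by
  let K : ((FreeIdx (n c) (r c) → ℝ) × (Fin (n c) → ℝ)) →ₗ[ℝ] (FreeIdx (n c) (n c) → ℝ) :=
    { toFun := fun x p => Sd (B c) x p.1.1 p.1.2
      map_add' := fun x y => by
        funext p; exact congrFun (congrFun (Sd_add (B c) x y) _) _
      map_smul' := fun t x => by
        funext p; exact congrFun (congrFun (Sd_smul (B c) t x) _) _ }
  have hK : Function.Injective K := by
    intro x y h
    have hS : Sd (B c) x = Sd (B c) y :=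
      symm_entries_eq (Sd_transpose _ _) (Sd_transpose _ _) (fun p => congrFun h p)
    have hblk : (fun c' => Sd (B c')
          (Pi.single (M := fun c' => FreeIdx (n c') (r c') → ℝ) c x.1 c', Pi.single (M := fun c' => Fin (n c') → ℝ) c x.2 c'))
        = (fun c' => Sd (B c')
          (Pi.single (M := fun c' => FreeIdx (n c') (r c') → ℝ) c y.1 c', Pi.single (M := fun c' => Fin (n c') → ℝ) c y.2 c')) := by
      funext c'
      by_cases hc : c' = c
      · subst hc
        simp only [Pi.single_eq_same]
        exact hS
      · rw [Pi.single_eq_of_ne hc, Pi.single_eq_of_ne hc, Pi.single_eq_of_ne hc,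
          Pi.single_eq_of_ne hc]
    have heq : Fdiff n r r0 A B
        (0, Pi.single (M := fun c' => FreeIdx (n c') (r c') → ℝ) c x.1,
          fun i => Pi.single (M := fun c' => Fin (n c') → ℝ) c x.2 (chanIdx n i).1 (chanIdx n i).2)
        = Fdiff n r r0 A B
        (0, Pi.single (M := fun c' => FreeIdx (n c') (r c') → ℝ) c y.1,
          fun i => Pi.single (M := fun c' => Fin (n c') → ℝ) c y.2 (chanIdx n i).1
            (chanIdx n i).2) := by
      rw [Fdiff_emb, Fdiff_emb, hblk]
    have hxy := hF heq
    have h1 : x.1 = y.1 := by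
      have := congrArg (fun z : (FreeIdx (∑ c, n c) r0 → ℝ)
          × ((c' : Fin C) → FreeIdx (n c') (r c') → ℝ) × (Fin (∑ c, n c) → ℝ) => z.2.1 c) hxy
      simpa [Pi.single_eq_same] using this
    have h2 : x.2 = y.2 := by
      funext i0
      have h3 := congrFun (congrArg (fun z : (FreeIdx (∑ c, n c) r0 → ℝ)
          × ((c' : Fin C) → FreeIdx (n c') (r c') → ℝ) × (Fin (∑ c, n c) → ℝ) => z.2.2) hxy)
          ((chanIdx n).symm ⟨c, i0⟩)
      have hsig : chanIdx n ((chanIdx n).symm ⟨c, i0⟩) = ⟨c, i0⟩ := Equiv.apply_symm_apply _ _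
      have hv : ∀ v : Fin (n c) → ℝ,
          Pi.single (M := fun c' => Fin (n c') → ℝ) c v
              (chanIdx n ((chanIdx n).symm ⟨c, i0⟩)).1 (chanIdx n ((chanIdx n).symm ⟨c, i0⟩)).2
            = v i0 := by
        intro v
        exact (congrArg (fun σ : (c' : Fin C) × Fin (n c') =>
          Pi.single (M := fun c' => Fin (n c') → ℝ) c v σ.1 σ.2) hsig).trans
          (by simp)
      exact ((hv x.2).symm.trans h3).trans (hv y.2)
    exact Prod.ext h1 h2
  have hle := LinearMap.finrank_le_finrank_of_injective hK
  rw [Module.finrank_pi, Module.finrank_prod, Module.finrank_pi, Module.finrank_pi] at hle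
  simpa using hle

/-- `D = Σ_c [n_c r_c − r_c (r_c − 1)/2]`, as a real number. -/
noncomputable def Dcount {C : ℕ} (n r : Fin C → ℕ) : ℝ :=
  ∑ c, ((n c : ℝ) * (r c : ℝ) - (r c : ℝ) * ((r c : ℝ) - 1) / 2)

lemma sqrt_bound {Nr D rr : ℝ} (hD : 0 ≤ D) (hrr : 0 ≤ rr) (hrN : rr ≤ Nr)
    (h : Nr * rr - rr * (rr - 1) / 2 + D + Nr ≤ Nr * Nr - Nr * (Nr - 1) / 2) :
    rr ≤ (2 * Nr + 1 - Real.sqrt (8 * (Nr + D) + 1)) / 2 := by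
  have hy : (0 : ℝ) ≤ 2 * Nr + 1 - 2 * rr := by linarith
  have hsq : 8 * (Nr + D) + 1 ≤ (2 * Nr + 1 - 2 * rr) ^ 2 := by nlinarith
  have h2 := Real.sqrt_le_sqrt hsq
  rw [Real.sqrt_sq hy] at h2
  linarith

/-- **Proposition 5 (necessity of Condition 4).**  If for some `A ∈ 𝔸_L`, `B ∈ 𝔹_L` the linear
map `F_{A,B} : 𝔸_L × 𝔹_L × Diag(n) → Sym(n)` is injective, then Condition 4 holds:
`r₀ ≤ (2n + 1 − √(8(n + D) + 1))/2` and `r_c ≤ (2n_c + 1 − √(8 n_c + 1))/2` for all `c`. -/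
theorem condition_four_of_injective_differential {C : ℕ} (n r : Fin C → ℕ) (r0 : ℕ)
    (hr0 : r0 ≤ ∑ c, n c) (hrc : ∀ c, r c ≤ n c)
    (hinj : ∃ (A : Matrix (Fin (∑ c, n c)) (Fin r0) ℝ)
        (B : ∀ c, Matrix (Fin (n c)) (Fin (r c)) ℝ),
        IsLT hr0 A ∧ (∀ c, IsLT (hrc c) (B c)) ∧
        Function.Injective (Fdiff n r r0 A B)) :
    (r0 : ℝ) ≤ (2 * (∑ c, n c : ℕ) + 1
        - Real.sqrt (8 * (((∑ c, n c : ℕ) : ℝ) + Dcount n r) + 1)) / 2 ∧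
    ∀ c, (r c : ℝ) ≤ (2 * (n c : ℝ) + 1 - Real.sqrt (8 * (n c : ℝ) + 1)) / 2 := by
  obtain ⟨A, B, -, -, hF⟩ := hinj
  have hDsum : Dcount n r = ∑ c, (Fintype.card (FreeIdx (n c) (r c)) : ℝ) := by
    unfold Dcount
    exact Finset.sum_congr rfl fun c _ => (card_freeIdx_real (n c) (r c) (hrc c)).symm
  have hD0 : 0 ≤ Dcount n r := by
    rw [hDsum, ← Nat.cast_sum]
    positivity
  constructor
  · have hd := dim_main n r r0 A B hF
    have hcast : (Fintype.card (FreeIdx (∑ c, n c) r0) : ℝ)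
        + (∑ c, (Fintype.card (FreeIdx (n c) (r c)) : ℝ)) + ((∑ c, n c : ℕ) : ℝ)
        ≤ (Fintype.card (FreeIdx (∑ c, n c) (∑ c, n c)) : ℝ) := by
      push_cast
      exact_mod_cast hd
    rw [card_freeIdx_real _ _ hr0, card_freeIdx_real _ _ le_rfl, ← hDsum] at hcast
    exact sqrt_bound hD0 (Nat.cast_nonneg r0) (by exact_mod_cast hr0) (by linarith)
  · intro c
    have hd := dim_chan n r r0 A B hF c
    have hcast : (Fintype.card (FreeIdx (n c) (r c)) : ℝ) + (n c : ℝ)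
        ≤ (Fintype.card (FreeIdx (n c) (n c)) : ℝ) := by exact_mod_cast hd
    rw [card_freeIdx_real _ _ (hrc c), card_freeIdx_real _ _ le_rfl] at hcast
    have := sqrt_bound (Nr := (n c : ℝ)) (D := 0) (le_refl (0:ℝ)) (Nat.cast_nonneg (r c))
      (by exact_mod_cast hrc c) (by linarith)
    simpa using this
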